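/- Consider SGD on the logistic loss with step size η_t = min{1/ε, 1/L_{i_t}(w_t)}, where L_i(w) = ln(1+exp(-y_i⟨x_i,w⟩)). For any comparator u ∈ ℝ^d, the iterates satisfy the pathwise inequality ‖w_{t+1} − u‖² ≤ ‖w_t − u‖² − η_t·L_{i_t}(w_t) + 2·η_t·L_{i_t}(u). -/

import Mathlib

open scoped RealInnerProductSpace

private noncomputable def sp : ℝ → ℝ := fun t => Real.log (1 + Real.exp (-t))

private lemma sp_hasDerivAt (t : ℝ) :
    HasDerivAt sp (-1 / (1 + Real.exp t)) t := by
  have h1 : HasDerivAt (fun s : ℝ => 1 + Real.exp (-s)) (-Real.exp (-t)) t := by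
    have h := (Real.hasDerivAt_exp (-t)).comp t (hasDerivAt_neg t)
    simpa using h.const_add 1
  have hpos : (0:ℝ) < 1 + Real.exp (-t) := by positivity
  have h2 := (Real.hasDerivAt_log (ne_of_gt hpos)).comp t h1
  have heq : (1 + Real.exp (-t))⁻¹ * -Real.exp (-t) = -1 / (1 + Real.exp t) := by
    have he : Real.exp (-t) = (Real.exp t)⁻¹ := Real.exp_neg t
    have h3 : (0:ℝ) < Real.exp t := Real.exp_pos t
    rw [he]
    field_simp
    ring
  have h4 : HasDerivAt sp ((1 + Real.exp (-t))⁻¹ * -Real.exp (-t)) t := h2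
  rwa [heq] at h4

private lemma sp_deriv : deriv sp = fun t => -1 / (1 + Real.exp t) :=
  funext fun t => (sp_hasDerivAt t).deriv

private lemma sp_convex : ConvexOn ℝ Set.univ sp := by
  apply Monotone.convexOn_univ_of_deriv (fun t => (sp_hasDerivAt t).differentiableAt)
  rw [sp_deriv]
  intro a b hab
  have h1 : (0:ℝ) < 1 + Real.exp a := by positivity
  have h2 : (0:ℝ) < 1 + Real.exp b := by positivity
  have := Real.exp_le_exp.2 hab
  simp only []
  rw [div_le_div_iff₀ h1 h2]
  nlinarith

/-- tangent line inequality: sp a - sp b ≤ sp'(a) * (a - b). -/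
private lemma sp_tangent (a b : ℝ) :
    sp a - sp b ≤ (-1 / (1 + Real.exp a)) * (a - b) := by
  rcases lt_trichotomy a b with h | h | h
  · have := sp_convex.le_slope_of_hasDerivAt (Set.mem_univ a) (Set.mem_univ b) h
      (sp_hasDerivAt a)
    rw [slope_def_field] at this
    have hba : (0:ℝ) < b - a := by linarith
    rw [le_div_iff₀ hba] at this
    nlinarith
  · simp [h]
  · have := sp_convex.slope_le_of_hasDerivAt (Set.mem_univ b) (Set.mem_univ a) h
      (sp_hasDerivAt a)
    rw [slope_def_field] at this
    have hba : (0:ℝ) < a - b := by linarith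
    rw [div_le_iff₀ hba] at this
    nlinarith

private lemma sp_pos (z : ℝ) : 0 < sp z := by
  have : (1:ℝ) < 1 + Real.exp (-z) := by have := Real.exp_pos (-z); linarith
  exact Real.log_pos this

private lemma grad_le_sp (z : ℝ) : 1 / (1 + Real.exp z) ≤ sp z := by
  have h1 : (0:ℝ) < 1 + Real.exp (-z) := by positivity
  have h2 : (0:ℝ) < Real.exp z := Real.exp_pos z
  have h := Real.log_le_sub_one_of_pos (x := (1 + Real.exp (-z))⁻¹) (by positivity)
  rw [Real.log_inv] at h
  have he : Real.exp (-z) = (Real.exp z)⁻¹ := Real.exp_neg z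
  have key : (1:ℝ) - (1 + Real.exp (-z))⁻¹ = 1 / (1 + Real.exp z) := by
    rw [he]; field_simp; ring
  unfold sp
  linarith [h, key]

/-- Pathwise SGD inequality for logistic loss: with step
`η = min {1/ε, 1/L_i(w)}` and update `w' = w − η • ∇L_i(w)` (where
`L_i(v) = ln(1+exp(−y_i⟨x_i,v⟩))` and
`∇L_i(v) = (−y_i/(1+exp(y_i⟨x_i,v⟩))) • x_i`), for any comparator `u`,
`‖w' − u‖² ≤ ‖w − u‖² − η·L_i(w) + 2η·L_i(u)`. -/
theorem stmt_14 {d n : ℕ} (x : Fin n → EuclideanSpace ℝ (Fin d))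
    (y : Fin n → ℝ) (hy : ∀ i, y i = 1 ∨ y i = -1) (hx : ∀ i, ‖x i‖ ≤ 1)
    (ε : ℝ) (hε : 0 < ε) (i : Fin n) (w u w' : EuclideanSpace ℝ (Fin d))
    (Li : EuclideanSpace ℝ (Fin d) → ℝ)
    (hLi : Li = fun v => Real.log (1 + Real.exp (-(y i * ⟪x i, v⟫))))
    (η : ℝ) (hη : η = min (1 / ε) (1 / Li w))
    (hupdate : w' = w - η • ((-(y i) / (1 + Real.exp (y i * ⟪x i, w⟫))) • x i)) :
    ‖w' - u‖ ^ 2 ≤ ‖w - u‖ ^ 2 - η * Li w + 2 * η * Li u := by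
  set z : ℝ := y i * ⟪x i, w⟫ with hz
  set b : ℝ := y i * ⟪x i, u⟫ with hb
  have hLw : Li w = sp z := by simp only [hLi, sp, hz]
  have hLu : Li u = sp b := by simp only [hLi, sp, hb]
  have hspz : 0 < sp z := sp_pos z
  have hez : (0:ℝ) < 1 + Real.exp z := by positivity
  have hy2 : y i * y i = 1 := by rcases hy i with h | h <;> rw [h] <;> norm_num
  -- step size facts
  have hηpos : 0 < η := by
    rw [hη]
    exact lt_min (by positivity) (by rw [hLw]; positivity)
  have hηLw : η * Li w ≤ 1 := by
    have h1 : η ≤ 1 / Li w := hη ▸ min_le_right _ _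
    rw [hLw] at h1 ⊢
    calc η * sp z ≤ (1 / sp z) * sp z := by nlinarith
      _ = 1 := by field_simp
  set c : ℝ := -(y i) / (1 + Real.exp z) with hc
  set g : EuclideanSpace ℝ (Fin d) := η • (c • x i) with hg
  have hsub : w' - u = (w - u) - g := by rw [hupdate]; module
  -- inner product term
  have hinner : ⟪w - u, g⟫ = η * ((-1 / (1 + Real.exp z)) * (z - b)) := by
    rw [hg, real_inner_smul_right, real_inner_smul_right]
    have hs : ⟪w - u, x i⟫ = ⟪x i, w⟫ - ⟪x i, u⟫ := by
      rw [real_inner_comm, inner_sub_right]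
    rw [hs, hc]
    have h1 : z - b = y i * (⟪x i, w⟫ - ⟪x i, u⟫) := by rw [hz, hb]; ring
    rw [h1]
    field_simp
  have htangent : sp z - sp b ≤ (-1 / (1 + Real.exp z)) * (z - b) := sp_tangent z b
  have hinner_ge : η * (sp z - sp b) ≤ ⟪w - u, g⟫ := by
    rw [hinner]; nlinarith
  -- norm of gradient step
  have hnormg : ‖g‖ ≤ η * sp z := by
    have h1 : ‖g‖ = η * (|c| * ‖x i‖) := by
      rw [hg, norm_smul, norm_smul, Real.norm_eq_abs, Real.norm_eq_abs,
        abs_of_pos hηpos]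
    have h2 : |c| = 1 / (1 + Real.exp z) := by
      rw [hc, abs_div, abs_of_pos hez, abs_neg]
      rcases hy i with h | h <;> rw [h] <;> norm_num
    rw [h1, h2]
    have h3 := grad_le_sp z
    have h4 := hx i
    have h5 : (0:ℝ) ≤ 1 / (1 + Real.exp z) := by positivity
    have h7 : 1 / (1 + Real.exp z) * ‖x i‖ ≤ sp z := by nlinarith [norm_nonneg (x i)]
    exact mul_le_mul_of_nonneg_left h7 hηpos.le
  have hnormg2 : ‖g‖ ^ 2 ≤ η * sp z := by
    have h1 : ‖g‖ ^ 2 ≤ (η * sp z) ^ 2 := by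
      have := norm_nonneg g; nlinarith
    have h2 : (η * sp z) ^ 2 ≤ η * sp z := by
      rw [hLw] at hηLw
      have hA : (0:ℝ) ≤ η * sp z := mul_nonneg hηpos.le hspz.le
      nlinarith [mul_nonneg hA (by linarith : (0:ℝ) ≤ 1 - η * sp z)]
    linarith
  -- putting it together
  rw [hsub, norm_sub_sq_real, hLw, hLu]
  linarith [hinner_ge, hnormg2]
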